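/- Let a, b, c, d ∈ ℂ and define H_V(x,u,v) = (1/x)·[u(u−1)²v² − (a(u−1)² + bu(u−1) − cxu)v + (1/4)((a+b)² − d²)(u−1)]. Then there exist complex numbers α, β, γ, δ (depending only on a, b, c, d) such that for every open set Ω ⊆ ℂ and all differentiable functions u, v : Ω → ℂ with x ≠ 0, u(x) ≠ 0 and u(x) ≠ 1 for all x ∈ Ω, if u'(x) = (∂H_V/∂v)(x,u(x),v(x)) and v'(x) = −(∂H_V/∂u)(x,u(x),v(x)) for all x ∈ Ω, then u''(x) = (1/(2u(x)) + 1/(u(x)−1))·u'(x)² − u'(x)/x + ((u(x)−1)²/x²)·(α·u(x) + β/u(x)) + γ·u(x)/x + δ·u(x)(u(x)+1)/(u(x)−1) for all x ∈ Ω. -/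

import Mathlib

set_option maxHeartbeats 1600000


/-- The Okamoto Hamiltonian of the fifth Painlevé equation:
`H_V(x,u,v) = (1/x)·[u(u−1)²v² − (a(u−1)² + bu(u−1) − cxu)v + (1/4)((a+b)² − d²)(u−1)]`. -/
noncomputable def HV (a b c d x u v : ℂ) : ℂ :=
  (1 / x) * (u * (u - 1) ^ 2 * v ^ 2
    - (a * (u - 1) ^ 2 + b * u * (u - 1) - c * x * u) * v
    + (1 / 4) * ((a + b) ^ 2 - d ^ 2) * (u - 1))

private lemma cubic_deriv (C3 C2 C1 C0 w : ℂ) :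
    deriv (fun t : ℂ => C3 * t ^ 3 + C2 * t ^ 2 + C1 * t + C0) w
      = 3 * C3 * w ^ 2 + 2 * C2 * w + C1 := by
  have h : HasDerivAt (fun t : ℂ => C3 * t ^ 3 + C2 * t ^ 2 + C1 * t + C0)
      (3 * C3 * w ^ 2 + 2 * C2 * w + C1) w := by
    have h3 := (hasDerivAt_pow 3 w).const_mul C3
    have h2 := (hasDerivAt_pow 2 w).const_mul C2
    have h1 := (hasDerivAt_id' (x := w)).const_mul C1
    have h0 := ((h3.add h2).add h1).add_const C0
    refine h0.congr_deriv ?_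
    push_cast
    ring
  exact h.deriv

private lemma step2 (a b c x P Q : ℂ) (u v : ℂ → ℂ) (hx : x ≠ 0)
    (hU : HasDerivAt u P x) (hV : HasDerivAt v Q x) :
    deriv (fun y => (2 * u y * (u y - 1) ^ 2 * v y
        - (a * (u y - 1) ^ 2 + b * u y * (u y - 1) - c * y * u y)) / y) x
      = ((2 * P * (u x - 1) ^ 2 * v x + 4 * u x * (u x - 1) * P * v x
          + 2 * u x * (u x - 1) ^ 2 * Q
          - (2 * a * (u x - 1) * P + b * P * (u x - 1) + b * u x * P
              - (c * u x + c * x * P))) * x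
          - (2 * u x * (u x - 1) ^ 2 * v x
            - (a * (u x - 1) ^ 2 + b * u x * (u x - 1) - c * x * u x))) / x ^ 2 := by
  have hG : HasDerivAt (fun y => 2 * u y * (u y - 1) ^ 2 * v y
      - (a * (u y - 1) ^ 2 + b * u y * (u y - 1) - c * y * u y))
      (2 * P * (u x - 1) ^ 2 * v x + 4 * u x * (u x - 1) * P * v x
        + 2 * u x * (u x - 1) ^ 2 * Q
        - (2 * a * (u x - 1) * P + b * P * (u x - 1) + b * u x * P
            - (c * u x + c * x * P))) x := by
    have h1 := ((hU.const_mul (2 : ℂ)).mul ((hU.sub_const 1).pow 2)).mul hV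
    have h2 := ((hU.sub_const 1).pow 2).const_mul a
    have h3 := (hU.const_mul b).mul (hU.sub_const 1)
    have h4 := ((hasDerivAt_id' (x := x)).const_mul c).mul hU
    have h := h1.sub ((h2.add h3).sub h4)
    refine h.congr_deriv ?_
    simp only [Pi.mul_apply, Pi.pow_apply]
    push_cast
    ring
  have h := hG.div (hasDerivAt_id' (x := x)) hx
  have h' : HasDerivAt (fun y => (2 * u y * (u y - 1) ^ 2 * v y
      - (a * (u y - 1) ^ 2 + b * u y * (u y - 1) - c * y * u y)) / y)
      (((2 * P * (u x - 1) ^ 2 * v x + 4 * u x * (u x - 1) * P * v x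
          + 2 * u x * (u x - 1) ^ 2 * Q
          - (2 * a * (u x - 1) * P + b * P * (u x - 1) + b * u x * P
              - (c * u x + c * x * P))) * x
          - (2 * u x * (u x - 1) ^ 2 * v x
            - (a * (u x - 1) ^ 2 + b * u x * (u x - 1) - c * x * u x))) / x ^ 2) x := by
    refine h.congr_deriv ?_
    ring
  exact h'.deriv

/-- Painlevé V admits a rational Hamiltonian form: there exist parameters `α β γ δ`
(depending only on `a b c d`) such that any solution `(u,v)` of the Hamiltonian system
`u' = ∂H_V/∂v`, `v' = −∂H_V/∂u` on an open set `Ω ⊆ ℂ` (with `x ≠ 0`, `u ≠ 0`, `u ≠ 1`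
on `Ω`) has `u` a solution of the fifth Painlevé equation `P_V(α,β,γ,δ)`. -/
theorem stmt_9 (a b c d : ℂ) :
    ∃ α β γ δ : ℂ, ∀ (Ω : Set ℂ), IsOpen Ω → ∀ u v : ℂ → ℂ,
      (∀ x ∈ Ω, x ≠ 0) → (∀ x ∈ Ω, u x ≠ 0) → (∀ x ∈ Ω, u x ≠ 1) →
      (∀ x ∈ Ω, HasDerivAt u (deriv (fun w => HV a b c d x (u x) w) (v x)) x) →
      (∀ x ∈ Ω, HasDerivAt v (-(deriv (fun w => HV a b c d x w (v x)) (u x))) x) →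
      ∀ x ∈ Ω, deriv (deriv u) x =
        (1 / (2 * u x) + 1 / (u x - 1)) * (deriv u x) ^ 2 - deriv u x / x
          + ((u x - 1) ^ 2 / x ^ 2) * (α * u x + β / u x)
          + γ * u x / x + δ * u x * (u x + 1) / (u x - 1) := by
  refine ⟨d ^ 2 / 2, -a ^ 2 / 2, c * (b + 1), -c ^ 2 / 2, ?_⟩
  intro Ω hΩ u v hx0 hu0 hu1 hHu hHv x hx
  have hx' : x ≠ 0 := hx0 x hx
  have hEv : ∀ y ∈ Ω, deriv (fun w => HV a b c d y (u y) w) (v y)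
      = (2 * u y * (u y - 1) ^ 2 * v y
          - (a * (u y - 1) ^ 2 + b * u y * (u y - 1) - c * y * u y)) / y := by
    intro y hy
    have hf : (fun w => HV a b c d y (u y) w)
        = fun t : ℂ => (0 : ℂ) * t ^ 3 + (u y * (u y - 1) ^ 2 / y) * t ^ 2
            + (-(a * (u y - 1) ^ 2 + b * u y * (u y - 1) - c * y * u y) / y) * t
            + (1 / 4) * ((a + b) ^ 2 - d ^ 2) * (u y - 1) / y := by
      funext t
      simp only [HV]
      ring
    rw [hf, cubic_deriv]
    ring
  have hEu : ∀ y ∈ Ω, deriv (fun w => HV a b c d y w (v y)) (u y)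
      = (3 * (u y) ^ 2 * (v y) ^ 2 - 4 * u y * (v y) ^ 2 + (v y) ^ 2
          - (2 * (a + b) * u y - (2 * a + b + c * y)) * v y
          + (1 / 4) * ((a + b) ^ 2 - d ^ 2)) / y := by
    intro y hy
    have hf : (fun w => HV a b c d y w (v y))
        = fun t : ℂ => ((v y) ^ 2 / y) * t ^ 3
            + ((-2 * (v y) ^ 2 - (a + b) * v y) / y) * t ^ 2
            + (((v y) ^ 2 + (2 * a + b + c * y) * v y
                + (1 / 4) * ((a + b) ^ 2 - d ^ 2)) / y) * t
            + ((-a * v y - (1 / 4) * ((a + b) ^ 2 - d ^ 2)) / y) := by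
      funext t
      simp only [HV]
      ring
    rw [hf, cubic_deriv]
    ring
  have hu'all : ∀ y ∈ Ω, HasDerivAt u
      ((2 * u y * (u y - 1) ^ 2 * v y
        - (a * (u y - 1) ^ 2 + b * u y * (u y - 1) - c * y * u y)) / y) y := by
    intro y hy
    have h := hHu y hy
    rwa [hEv y hy] at h
  have hVx : HasDerivAt v
      (-((3 * (u x) ^ 2 * (v x) ^ 2 - 4 * u x * (v x) ^ 2 + (v x) ^ 2
          - (2 * (a + b) * u x - (2 * a + b + c * x)) * v x
          + (1 / 4) * ((a + b) ^ 2 - d ^ 2)) / x)) x := by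
    have h := hHv x hx
    rwa [hEu x hx] at h
  have hDD : deriv (deriv u) x
      = deriv (fun y => (2 * u y * (u y - 1) ^ 2 * v y
          - (a * (u y - 1) ^ 2 + b * u y * (u y - 1) - c * y * u y)) / y) x := by
    apply Filter.EventuallyEq.deriv_eq
    filter_upwards [hΩ.mem_nhds hx] with y hy
    exact (hu'all y hy).deriv
  have e1 : deriv u x = (2 * u x * (u x - 1) ^ 2 * v x
      - (a * (u x - 1) ^ 2 + b * u x * (u x - 1) - c * x * u x)) / x :=
    (hu'all x hx).deriv
  have e2 := step2 a b c x
      ((2 * u x * (u x - 1) ^ 2 * v x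
        - (a * (u x - 1) ^ 2 + b * u x * (u x - 1) - c * x * u x)) / x)
      (-((3 * (u x) ^ 2 * (v x) ^ 2 - 4 * u x * (v x) ^ 2 + (v x) ^ 2
          - (2 * (a + b) * u x - (2 * a + b + c * x)) * v x
          + (1 / 4) * ((a + b) ^ 2 - d ^ 2)) / x))
      u v hx' (hu'all x hx) hVx
  rw [hDD, e2, e1]
  have h0 : u x ≠ 0 := hu0 x hx
  have h1 : u x - 1 ≠ 0 := sub_ne_zero.mpr (hu1 x hx)
  trans (((1 : ℂ) * a
      + (-1 : ℂ) * a * b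
      + (-2 : ℂ) * a ^ 2
      + (-2 : ℂ) * (v x) * a
      + (1/2 : ℂ) * (u x) * d ^ 2
      + (-1 : ℂ) * (u x) * b
      + (1/2 : ℂ) * (u x) * b ^ 2
      + (-2 : ℂ) * (u x) * a
      + (5 : ℂ) * (u x) * a * b
      + (11/2 : ℂ) * (u x) * a ^ 2
      + (-2 : ℂ) * (u x) * (v x)
      + (2 : ℂ) * (u x) * (v x) * b
      + (12 : ℂ) * (u x) * (v x) * a
      + (2 : ℂ) * (u x) * (v x) ^ 2
      + (-1 : ℂ) * (u x) ^ 2 * d ^ 2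
      + (1 : ℂ) * (u x) ^ 2 * b
      + (-2 : ℂ) * (u x) ^ 2 * b ^ 2
      + (1 : ℂ) * (u x) ^ 2 * a
      + (-7 : ℂ) * (u x) ^ 2 * a * b
      + (-5 : ℂ) * (u x) ^ 2 * a ^ 2
      + (4 : ℂ) * (u x) ^ 2 * (v x)
      + (-10 : ℂ) * (u x) ^ 2 * (v x) * b
      + (-24 : ℂ) * (u x) ^ 2 * (v x) * a
      + (-12 : ℂ) * (u x) ^ 2 * (v x) ^ 2
      + (1/2 : ℂ) * (u x) ^ 3 * d ^ 2
      + (3/2 : ℂ) * (u x) ^ 3 * b ^ 2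
      + (3 : ℂ) * (u x) ^ 3 * a * b
      + (3/2 : ℂ) * (u x) ^ 3 * a ^ 2
      + (-2 : ℂ) * (u x) ^ 3 * (v x)
      + (14 : ℂ) * (u x) ^ 3 * (v x) * b
      + (20 : ℂ) * (u x) ^ 3 * (v x) * a
      + (24 : ℂ) * (u x) ^ 3 * (v x) ^ 2
      + (-6 : ℂ) * (u x) ^ 4 * (v x) * b
      + (-6 : ℂ) * (u x) ^ 4 * (v x) * a
      + (-20 : ℂ) * (u x) ^ 4 * (v x) ^ 2
      + (6 : ℂ) * (u x) ^ 5 * (v x) ^ 2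
      + (-1 : ℂ) * x * a * c
      + (2 : ℂ) * x * (u x) * b * c
      + (4 : ℂ) * x * (u x) * a * c
      + (2 : ℂ) * x * (u x) * (v x) * c
      + (-3 : ℂ) * x * (u x) ^ 2 * b * c
      + (-3 : ℂ) * x * (u x) ^ 2 * a * c
      + (-8 : ℂ) * x * (u x) ^ 2 * (v x) * c
      + (6 : ℂ) * x * (u x) ^ 3 * (v x) * c
      + (1 : ℂ) * x ^ 2 * (u x) * c ^ 2) / x ^ 2)
  · rw [div_eq_div_iff (pow_ne_zero 2 hx') (pow_ne_zero 2 hx')]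
    field_simp
    ring
  · have h2 : (2 : ℂ) * (u x) ^ 2 * (u x - 1) * x ^ 2 ≠ 0 :=
      mul_ne_zero (mul_ne_zero (mul_ne_zero two_ne_zero (pow_ne_zero 2 h0)) h1)
        (pow_ne_zero 2 hx')
    have ht1 : (1 / (2 * u x) + 1 / (u x - 1)) * (((2 * u x * (u x - 1) ^ 2 * v x - (a * (u x - 1) ^ 2 + b * u x * (u x - 1) - c * x * u x)) / x) ^ 2)
        = ((-1 : ℂ) * (u x) * a ^ 2
        + (2 : ℂ) * (u x) ^ 2 * a * b
        + (7 : ℂ) * (u x) ^ 2 * a ^ 2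
        + (4 : ℂ) * (u x) ^ 2 * (v x) * a
        + (-1 : ℂ) * (u x) ^ 3 * b ^ 2
        + (-12 : ℂ) * (u x) ^ 3 * a * b
        + (-18 : ℂ) * (u x) ^ 3 * a ^ 2
        + (-4 : ℂ) * (u x) ^ 3 * (v x) * b
        + (-28 : ℂ) * (u x) ^ 3 * (v x) * a
        + (-4 : ℂ) * (u x) ^ 3 * (v x) ^ 2
        + (5 : ℂ) * (u x) ^ 4 * b ^ 2
        + (24 : ℂ) * (u x) ^ 4 * a * b
        + (22 : ℂ) * (u x) ^ 4 * a ^ 2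
        + (24 : ℂ) * (u x) ^ 4 * (v x) * b
        + (72 : ℂ) * (u x) ^ 4 * (v x) * a
        + (28 : ℂ) * (u x) ^ 4 * (v x) ^ 2
        + (-7 : ℂ) * (u x) ^ 5 * b ^ 2
        + (-20 : ℂ) * (u x) ^ 5 * a * b
        + (-13 : ℂ) * (u x) ^ 5 * a ^ 2
        + (-48 : ℂ) * (u x) ^ 5 * (v x) * b
        + (-88 : ℂ) * (u x) ^ 5 * (v x) * a
        + (-72 : ℂ) * (u x) ^ 5 * (v x) ^ 2
        + (3 : ℂ) * (u x) ^ 6 * b ^ 2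
        + (6 : ℂ) * (u x) ^ 6 * a * b
        + (3 : ℂ) * (u x) ^ 6 * a ^ 2
        + (40 : ℂ) * (u x) ^ 6 * (v x) * b
        + (52 : ℂ) * (u x) ^ 6 * (v x) * a
        + (88 : ℂ) * (u x) ^ 6 * (v x) ^ 2
        + (-12 : ℂ) * (u x) ^ 7 * (v x) * b
        + (-12 : ℂ) * (u x) ^ 7 * (v x) * a
        + (-52 : ℂ) * (u x) ^ 7 * (v x) ^ 2
        + (12 : ℂ) * (u x) ^ 8 * (v x) ^ 2
        + (2 : ℂ) * x * (u x) ^ 2 * a * c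
        + (-2 : ℂ) * x * (u x) ^ 3 * b * c
        + (-10 : ℂ) * x * (u x) ^ 3 * a * c
        + (-4 : ℂ) * x * (u x) ^ 3 * (v x) * c
        + (8 : ℂ) * x * (u x) ^ 4 * b * c
        + (14 : ℂ) * x * (u x) ^ 4 * a * c
        + (20 : ℂ) * x * (u x) ^ 4 * (v x) * c
        + (-6 : ℂ) * x * (u x) ^ 5 * b * c
        + (-6 : ℂ) * x * (u x) ^ 5 * a * c
        + (-28 : ℂ) * x * (u x) ^ 5 * (v x) * c
        + (12 : ℂ) * x * (u x) ^ 6 * (v x) * c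
        + (-1 : ℂ) * x ^ 2 * (u x) ^ 3 * c ^ 2
        + (3 : ℂ) * x ^ 2 * (u x) ^ 4 * c ^ 2) / (2 * (u x) ^ 2 * (u x - 1) * x ^ 2) := by
      field_simp
      ring
    have ht2 : ((2 * u x * (u x - 1) ^ 2 * v x - (a * (u x - 1) ^ 2 + b * u x * (u x - 1) - c * x * u x)) / x) / x
        = ((2 : ℂ) * (u x) ^ 2 * a
        + (-2 : ℂ) * (u x) ^ 3 * b
        + (-6 : ℂ) * (u x) ^ 3 * a
        + (-4 : ℂ) * (u x) ^ 3 * (v x)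
        + (4 : ℂ) * (u x) ^ 4 * b
        + (6 : ℂ) * (u x) ^ 4 * a
        + (12 : ℂ) * (u x) ^ 4 * (v x)
        + (-2 : ℂ) * (u x) ^ 5 * b
        + (-2 : ℂ) * (u x) ^ 5 * a
        + (-12 : ℂ) * (u x) ^ 5 * (v x)
        + (4 : ℂ) * (u x) ^ 6 * (v x)
        + (-2 : ℂ) * x * (u x) ^ 3 * c
        + (2 : ℂ) * x * (u x) ^ 4 * c) / (2 * (u x) ^ 2 * (u x - 1) * x ^ 2) := by
      field_simp
      ring
    have ht3 : ((u x - 1) ^ 2 / x ^ 2) * (d ^ 2 / 2 * u x + -a ^ 2 / 2 / u x)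
        = ((1 : ℂ) * (u x) * a ^ 2
        + (-3 : ℂ) * (u x) ^ 2 * a ^ 2
        + (-1 : ℂ) * (u x) ^ 3 * d ^ 2
        + (3 : ℂ) * (u x) ^ 3 * a ^ 2
        + (3 : ℂ) * (u x) ^ 4 * d ^ 2
        + (-1 : ℂ) * (u x) ^ 4 * a ^ 2
        + (-3 : ℂ) * (u x) ^ 5 * d ^ 2
        + (1 : ℂ) * (u x) ^ 6 * d ^ 2) / (2 * (u x) ^ 2 * (u x - 1) * x ^ 2) := by
      field_simp
      ring
    have ht4 : c * (b + 1) * u x / x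
        = ((-2 : ℂ) * x * (u x) ^ 3 * c
        + (-2 : ℂ) * x * (u x) ^ 3 * b * c
        + (2 : ℂ) * x * (u x) ^ 4 * c
        + (2 : ℂ) * x * (u x) ^ 4 * b * c) / (2 * (u x) ^ 2 * (u x - 1) * x ^ 2) := by
      field_simp
      ring
    have ht5 : -c ^ 2 / 2 * u x * (u x + 1) / (u x - 1)
        = ((-1 : ℂ) * x ^ 2 * (u x) ^ 3 * c ^ 2
        + (-1 : ℂ) * x ^ 2 * (u x) ^ 4 * c ^ 2) / (2 * (u x) ^ 2 * (u x - 1) * x ^ 2) := by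
      field_simp
      ring
    rw [ht1, ht2, ht3, ht4, ht5, div_sub_div_same, ← add_div, ← add_div,
      ← add_div, div_eq_div_iff (pow_ne_zero 2 hx') h2]
    ring
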